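/- For any tree grammar G' of order n such that no word in its ε-adjusted frontier language contains the symbol e, there exists a word grammar G of order at most n+1 with W(G) = L_leaf^ε(G'). Concretely, G is obtained by replacing each nullary terminal a ≠ e by a unary terminal, replacing e by a non-terminal E : o → o with rule E x → x, replacing the binary terminal br by a non-terminal Br : (o→o)→(o→o)→(o→o) with rule Br f g x → f (g x), η-expanding every rule with a fresh order-0 argument, and adding a new start symbol S'' with rule S'' → S e. -/

import Mathlib

/-- Sorts (simple types): κ ::= o | κ₁ → κ₂. -/
inductive STy where
  | o : STy
  | arr : STy → STy → STy
deriving DecidableEq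

/-- ord(o)=0, ord(κ₁→κ₂)=max(ord κ₁ + 1, ord κ₂). -/
def STy.ord : STy → Nat
  | .o => 0
  | .arr a b => max (a.ord + 1) b.ord

/-- The list of argument sorts of a sort. -/
def STy.args : STy → List STy
  | .o => []
  | .arr a b => a :: b.args

/-- The sort o → ⋯ → o → o with n arguments (sort of an arity-n terminal). -/
def tyOfArity : Nat → STy
  | 0 => .o
  | n + 1 => .arr .o (tyOfArity n)

/-- Applicative terms over non-terminals `N` and terminals `T`,
    with variables named by natural numbers. -/
inductive Tm (N T : Type) where
  | var : Nat → Tm N T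
  | nt : N → Tm N T
  | tm : T → Tm N T
  | app : Tm N T → Tm N T → Tm N T
deriving DecidableEq

/-- Simultaneous substitution of the terms `ts` for the variables 0,…,k−1. -/
def substL {N T : Type} (ts : List (Tm N T)) : Tm N T → Tm N T
  | .var n => ts.getD n (.var n)
  | .nt A => .nt A
  | .tm a => .tm a
  | .app s t => .app (substL ts s) (substL ts t)

/-- Simple typing of applicative terms: terminals of arity k have sort o^k → o. -/
inductive HasTy {N T : Type} (ar : T → Nat) (nty : N → STy) :
    List STy → Tm N T → STy → Prop where
  | var {Γ n κ} : Γ[n]? = some κ → HasTy ar nty Γ (.var n) κ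
  | nt {Γ A} : HasTy ar nty Γ (.nt A) (nty A)
  | tm {Γ a} : HasTy ar nty Γ (.tm a) (tyOfArity (ar a))
  | app {Γ s t κ₁ κ₂} : HasTy ar nty Γ s (.arr κ₁ κ₂) → HasTy ar nty Γ t κ₁ →
      HasTy ar nty Γ (.app s t) κ₂

/-- A higher-order grammar over terminals `T` with arities `ar`: finitely many
    sorted non-terminals, a base-sort start symbol, and for each non-terminal a
    finite set of rule bodies `t` (the rule being A x₁ ⋯ x_k → t), each
    well-typed of base sort under the parameter sorts of A. -/
structure Grammar (T : Type) (ar : T → Nat) where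
  N : Type
  nFin : Finite N
  nty : N → STy
  start : N
  startO : nty start = .o
  rules : N → List (Tm N T)
  rulesTy : ∀ A t, t ∈ rules A → HasTy ar nty (nty A).args t .o

/-- Iterated application to a list of arguments. -/
def appList {N T : Type} : Tm N T → List (Tm N T) → Tm N T
  | s, [] => s
  | s, t :: ts => appList (.app s t) ts

/-- One-step rewriting: a fully applied non-terminal is rewritten by one of its
    rules, and reduction is allowed in the arguments of a terminal. -/
inductive Red {T : Type} {ar : T → Nat} (G : Grammar T ar) :
    Tm G.N T → Tm G.N T → Prop where
  | step {A body ts} : body ∈ G.rules A → ts.length = (G.nty A).args.length →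
      Red G (appList (.nt A) ts) (substL ts body)
  | ctx {a t t' ts₁ ts₂} : Red G t t' → ts₁.length + 1 + ts₂.length = ar a →
      Red G (appList (.tm a) (ts₁ ++ t :: ts₂)) (appList (.tm a) (ts₁ ++ t' :: ts₂))

/-- Many-step reduction. -/
def RedStar {T : Type} {ar : T → Nat} (G : Grammar T ar) :
    Tm G.N T → Tm G.N T → Prop :=
  Relation.ReflTransGen (Red G)

/-- The grammar has order at most n. -/
def Grammar.orderLE {T : Type} {ar : T → Nat} (G : Grammar T ar) (n : Nat) : Prop :=
  ∀ A, (G.nty A).ord ≤ n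

/-- Terminal alphabet of word grammars: `some a` has arity 1, `none` is the
    end-of-word symbol e of arity 0. -/
def wordAr {β : Type} : Option β → Nat
  | none => 0
  | some _ => 1

/-- The term a₁(⋯(a_n e)⋯) representing the word a₁⋯a_n. -/
def wordTm {N β : Type} : List β → Tm N (Option β)
  | [] => .tm none
  | a :: w => .app (.tm (some a)) (wordTm w)

/-- The word language of a word grammar. -/
def WordLang {β : Type} (G : Grammar (Option β) wordAr) : Set (List β) :=
  { w | RedStar G (.nt G.start) (wordTm w) }

/-- Terminal alphabet of tree grammars: a binary `br`, a nullary `e`, and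
    nullary letters from β. -/
inductive TSym (β : Type) where
  | br : TSym β
  | e : TSym β
  | ltr : β → TSym β
deriving DecidableEq

def treeAr {β : Type} : TSym β → Nat
  | .br => 2
  | .e => 0
  | .ltr _ => 0

/-- Trees over the alphabet {br, e} ∪ β. -/
inductive BT (β : Type) where
  | e : BT β
  | ltr : β → BT β
  | br : BT β → BT β → BT β
deriving DecidableEq

/-- A tree as an applicative term. -/
def BT.toTm {N β : Type} : BT β → Tm N (TSym β)
  | .e => .tm .e
  | .ltr a => .tm (.ltr a)
  | .br l r => .app (.app (.tm .br) l.toTm) r.toTm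

/-- The frontier word of a tree; `none` stands for the leaf symbol e. -/
def BT.leaves {β : Type} : BT β → List (Option β)
  | .e => [none]
  | .ltr a => [some a]
  | .br l r => l.leaves ++ r.leaves

/-- The frontier language of a tree grammar. -/
def LeafLang {β : Type} (G : Grammar (TSym β) treeAr) : Set (List (Option β)) :=
  { w | ∃ π : BT β, RedStar G (.nt G.start) π.toTm ∧ π.leaves = w }

/-- The ε-adjusted frontier language: the single-leaf word "e" counts as ε. -/
def LeafLangE {β : Type} (G : Grammar (TSym β) treeAr) : Set (List (Option β)) :=
  { w | w ∈ LeafLang G ∧ w ≠ [none] } ∪ { w | w = [] ∧ [none] ∈ LeafLang G }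

section Spine
variable {N T : Type}

theorem appList_append (s : Tm N T) (l l' : List (Tm N T)) :
    appList s (l ++ l') = appList (appList s l) l' := by
  induction l generalizing s with
  | nil => rfl
  | cons t l ih => simp [appList, ih]

theorem appList_concat (s : Tm N T) (l : List (Tm N T)) (t : Tm N T) :
    appList s (l ++ [t]) = .app (appList s l) t := by
  rw [appList_append]; rfl

def headOf : Tm N T → Tm N T
  | .app s _ => headOf s
  | t => t

def spineArgs : Tm N T → List (Tm N T)
  | .app s t => spineArgs s ++ [t]
  | _ => []

@[simp] theorem headOf_app (s t : Tm N T) : headOf (.app s t) = headOf s := rfl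
@[simp] theorem headOf_nt (A : N) : headOf (.nt A : Tm N T) = .nt A := rfl
@[simp] theorem headOf_tm (a : T) : headOf (.tm a : Tm N T) = .tm a := rfl
@[simp] theorem headOf_var (i : Nat) : headOf (.var i : Tm N T) = .var i := rfl
@[simp] theorem spineArgs_app (s t : Tm N T) : spineArgs (.app s t) = spineArgs s ++ [t] := rfl
@[simp] theorem spineArgs_nt (A : N) : spineArgs (.nt A : Tm N T) = [] := rfl
@[simp] theorem spineArgs_tm (a : T) : spineArgs (.tm a : Tm N T) = [] := rfl
@[simp] theorem spineArgs_var (i : Nat) : spineArgs (.var i : Tm N T) = [] := rfl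

@[simp] theorem headOf_appList (s : Tm N T) (ts : List (Tm N T)) :
    headOf (appList s ts) = headOf s := by
  induction ts generalizing s with
  | nil => rfl
  | cons t ts ih => simp [appList, ih]

@[simp] theorem spineArgs_appList (s : Tm N T) (ts : List (Tm N T)) :
    spineArgs (appList s ts) = spineArgs s ++ ts := by
  induction ts generalizing s with
  | nil => simp [appList]
  | cons t ts ih => simp [appList, ih]

theorem appList_nt_inj {A B : N} {ts ss : List (Tm N T)}
    (h : appList (.nt A) ts = appList (.nt B) ss) : A = B ∧ ts = ss := by
  have h1 := congrArg headOf h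
  have h2 := congrArg spineArgs h
  simp at h1 h2
  exact ⟨h1, h2⟩

theorem appList_nt_ne_tm {A : N} {ts : List (Tm N T)} {a : T}
    (h : appList (.nt A) ts = .tm a) : False := by
  have h1 := congrArg headOf h
  simp at h1

theorem appList_nt_ne_app_tm {A : N} {ts : List (Tm N T)} {a : T} {x : Tm N T}
    (h : appList (.nt A) ts = .app (.tm a) x) : False := by
  have h1 := congrArg headOf h
  simp at h1

theorem exists_spine (t : Tm N T) :
    (∃ i ts, t = appList (.var i) ts) ∨ (∃ A ts, t = appList (.nt A) ts) ∨
      (∃ a ts, t = appList (.tm a) ts) := by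
  induction t with
  | var i => exact .inl ⟨i, [], rfl⟩
  | nt A => exact .inr (.inl ⟨A, [], rfl⟩)
  | tm a => exact .inr (.inr ⟨a, [], rfl⟩)
  | app s t ihs _ =>
    rcases ihs with ⟨i, ts, rfl⟩ | ⟨A, ts, rfl⟩ | ⟨a, ts, rfl⟩
    · exact .inl ⟨i, ts ++ [t], by rw [appList_concat]⟩
    · exact .inr (.inl ⟨A, ts ++ [t], by rw [appList_concat]⟩)
    · exact .inr (.inr ⟨a, ts ++ [t], by rw [appList_concat]⟩)

theorem substL_nil (t : Tm N T) : substL [] t = t := by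
  induction t with
  | var n => rfl
  | nt A => rfl
  | tm a => rfl
  | app s t ihs iht => simp [substL, ihs, iht]

end Spine
section Typing
variable {N T : Type} {ar : T → Nat} {nty : N → STy}

def mkArr (l : List STy) (κ : STy) : STy := l.foldr .arr κ

@[simp] theorem args_mkArr (l : List STy) : (mkArr l .o).args = l := by
  induction l with
  | nil => rfl
  | cons a l ih => simpa [mkArr, STy.args] using ih

theorem hasTy_appList : ∀ {ts : List (Tm N T)} {s : Tm N T} {Γ : List STy} {κ : STy},
    HasTy ar nty Γ (appList s ts) κ →
    ∃ σs, HasTy ar nty Γ s (mkArr σs κ) ∧ List.Forall₂ (HasTy ar nty Γ) ts σs := by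
  intro ts
  induction ts with
  | nil => exact fun h => ⟨[], h, .nil⟩
  | cons t ts ih =>
    intro s Γ κ h
    obtain ⟨σs, hs, hts⟩ := ih h
    cases hs with
    | app h1 h2 => exact ⟨_ :: σs, h1, .cons h2 hts⟩

theorem forall₂_getD {R : Tm N T → STy → Prop} {ts : List (Tm N T)} {σs : List STy}
    (h : List.Forall₂ R ts σs) : ∀ i κ d, σs[i]? = some κ → R (ts.getD i d) κ := by
  induction h with
  | nil => intro i κ d h; simp at h
  | cons hr hl ih =>
    intro i κ d h
    cases i with
    | zero => simp_all
    | succ i => simpa using ih i κ d (by simpa using h)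

theorem hasTy_substL {Γ Δ : List STy} {t : Tm N T} {κ : STy} {ts : List (Tm N T)}
    (h : HasTy ar nty Γ t κ)
    (hts : ∀ i κ', Γ[i]? = some κ' → HasTy ar nty Δ (ts.getD i (.var i)) κ') :
    HasTy ar nty Δ (substL ts t) κ := by
  induction h with
  | var hv => exact hts _ _ hv
  | nt => exact .nt
  | tm => exact .tm
  | app h1 h2 ih1 ih2 => exact .app ih1 ih2

theorem hasTy_var_lt {Γ : List STy} {i : Nat} {κ : STy}
    (h : Γ[i]? = some κ) : i < Γ.length := by
  exact List.getElem?_eq_some_iff.mp h |>.1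
end Typing
section Word
variable {β : Type} {G : Grammar (Option β) wordAr}

inductive PW (G : Grammar (Option β) wordAr) : Nat → Tm G.N (Option β) → List β → Prop
  | nil : PW G 0 (.tm none) []
  | cons {n s w a} : PW G n s w → PW G (n+1) (.app (.tm (some a)) s) (a :: w)
  | step {n A ts body w} : body ∈ G.rules A → ts.length = (G.nty A).args.length →
      PW G n (substL ts body) w → PW G (n+1) (appList (.nt A) ts) w

theorem PW.nt_inv {m A ts w} (h : PW G m (appList (.nt A) ts) w) :
    ∃ k body, m = k + 1 ∧ body ∈ G.rules A ∧ ts.length = (G.nty A).args.length ∧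
      PW G k (substL ts body) w := by
  generalize hs : appList (.nt A) ts = s at h
  cases h with
  | nil => exact absurd (congrArg headOf hs) (by simp)
  | cons _ => exact absurd (congrArg headOf hs) (by simp)
  | step hb hl hp =>
    obtain ⟨hA, hts⟩ := appList_nt_inj hs.symm
    subst hA; subst hts
    exact ⟨_, _, rfl, hb, hl, hp⟩

theorem PW.cons_inv {m a s w} (h : PW G m (.app (.tm (some a)) s) w) :
    ∃ k w', m = k + 1 ∧ w = a :: w' ∧ PW G k s w' := by
  generalize hs : Tm.app (.tm (some a)) s = s' at h
  cases h with
  | nil => exact absurd hs (by simp)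
  | cons hp =>
    obtain ⟨h1, h2⟩ := Tm.app.inj hs
    obtain rfl := Option.some.inj (Tm.tm.inj h1)
    subst h2
    exact ⟨_, _, rfl, rfl, hp⟩
  | step _ _ _ => exact absurd (congrArg headOf hs) (by simp)

theorem PW.none_inv {m w} (h : PW G m (.tm none) w) : w = [] := by
  generalize hs : (Tm.tm none : Tm G.N (Option β)) = s' at h
  cases h with
  | nil => rfl
  | cons _ => exact absurd hs (by simp)
  | step _ _ _ => exact absurd (congrArg headOf hs) (by simp)

theorem PW.of_red {s s' : Tm G.N (Option β)} (h : Red G s s') :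
    ∀ {m w}, PW G m s' w → ∃ m', PW G m' s w := by
  induction h with
  | step hb hl => exact fun hp => ⟨_, .step hb hl hp⟩
  | @ctx a t t' ts₁ ts₂ hred hlen ih =>
    intro m w hp
    match a, hlen with
    | none, hlen => simp [wordAr] at hlen
    | some b, hlen =>
      have h1 : ts₁.length = 0 := by simp [wordAr] at hlen; omega
      have h2 : ts₂.length = 0 := by simp [wordAr] at hlen; omega
      rw [List.length_eq_zero_iff] at h1 h2
      subst h1; subst h2
      simp only [List.nil_append] at hp ⊢
      have hp' : PW G m (.app (.tm (some b)) t') w := hp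
      obtain ⟨k, w', rfl, rfl, hk⟩ := hp'.cons_inv
      obtain ⟨m', hm'⟩ := ih hk
      exact ⟨m' + 1, .cons hm'⟩

theorem PW.word_self (w : List β) : PW G w.length (wordTm w) w := by
  induction w with
  | nil => exact .nil
  | cons a w ih => exact .cons ih

theorem PW.of_redStar {s : Tm G.N (Option β)} {w : List β}
    (h : RedStar G s (wordTm w)) : ∃ m, PW G m s w := by
  induction h using Relation.ReflTransGen.head_induction_on with
  | refl => exact ⟨_, PW.word_self w⟩
  | head hr _ ih =>
    obtain ⟨m, hm⟩ := ih
    exact PW.of_red hr hm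

theorem redStar_app_word {a : β} {s s' : Tm G.N (Option β)} (h : RedStar G s s') :
    RedStar G (.app (.tm (some a)) s) (.app (.tm (some a)) s') := by
  refine Relation.ReflTransGen.lift (fun u => Tm.app (.tm (some a)) u) (fun x y hxy => ?_) _ _ h
  have := Red.ctx (G := G) (a := some a) (ts₁ := []) (ts₂ := []) hxy (by rfl)
  simpa [appList, Function.onFun] using this

theorem PW.redStar {m : Nat} {s : Tm G.N (Option β)} {w : List β}
    (h : PW G m s w) : RedStar G s (wordTm w) := by
  induction h with
  | nil => exact .refl
  | cons _ ih => exact redStar_app_word ih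
  | step hb hl _ ih => exact .head (.step hb hl) ih

end Word
section Tree
variable {β : Type} {G : Grammar (TSym β) treeAr}

inductive PT (G : Grammar (TSym β) treeAr) : Tm G.N (TSym β) → BT β → Prop
  | e : PT G (.tm .e) .e
  | ltr {a} : PT G (.tm (.ltr a)) (.ltr a)
  | br {s t l r} : PT G s l → PT G t r → PT G (.app (.app (.tm .br) s) t) (.br l r)
  | step {A ts body π} : body ∈ G.rules A → ts.length = (G.nty A).args.length →
      PT G (substL ts body) π → PT G (appList (.nt A) ts) π

theorem PT.br_inv {x y : Tm G.N (TSym β)} {π} (h : PT G (.app (.app (.tm .br) x) y) π) :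
    ∃ l r, π = .br l r ∧ PT G x l ∧ PT G y r := by
  generalize hs : Tm.app (.app (.tm .br) x) y = s at h
  cases h with
  | e => exact absurd hs (by simp)
  | ltr => exact absurd hs (by simp)
  | br h1 h2 =>
    obtain ⟨h3, h4⟩ := Tm.app.inj hs
    obtain ⟨h5, h6⟩ := Tm.app.inj h3
    subst h4; subst h6
    exact ⟨_, _, rfl, h1, h2⟩
  | step _ _ _ => exact absurd (congrArg headOf hs).symm (by simp)

theorem PT.of_red {s s' : Tm G.N (TSym β)} (h : Red G s s') :
    ∀ {π}, PT G s' π → PT G s π := by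
  induction h with
  | step hb hl => exact fun hp => .step hb hl hp
  | @ctx a t t' ts₁ ts₂ hred hlen ih =>
    intro π hp
    match a, hlen with
    | .e, hlen => simp [treeAr] at hlen
    | .ltr b, hlen => simp [treeAr] at hlen
    | .br, hlen =>
      simp only [treeAr] at hlen
      match ts₁, ts₂ with
      | [], [] => simp at hlen
      | [], y :: y' :: ys => simp at hlen; omega
      | x :: x' :: xs, _ => simp at hlen; omega
      | [x], _ :: _ => simp at hlen
      | [], [y] =>
        simp only [appList, List.nil_append] at hp ⊢
        have hp' : PT G (.app (.app (.tm .br) t') y) π := hp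
        obtain ⟨l, r, rfl, h1, h2⟩ := hp'.br_inv
        exact .br (ih h1) h2
      | [x], [] =>
        simp only [appList, List.singleton_append] at hp ⊢
        have hp' : PT G (.app (.app (.tm .br) x) t') π := hp
        obtain ⟨l, r, rfl, h1, h2⟩ := hp'.br_inv
        exact .br h1 (ih h2)

theorem PT.toTm_self (π : BT β) : PT G π.toTm π := by
  induction π with
  | e => exact .e
  | ltr a => exact .ltr
  | br l r ihl ihr => exact .br ihl ihr

theorem PT.of_redStar {s : Tm G.N (TSym β)} {π : BT β}
    (h : RedStar G s π.toTm) : PT G s π := by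
  induction h using Relation.ReflTransGen.head_induction_on with
  | refl => exact PT.toTm_self π
  | head hr _ ih => exact PT.of_red hr ih

theorem redStar_br_left {s s' y : Tm G.N (TSym β)} (h : RedStar G s s') :
    RedStar G (.app (.app (.tm .br) s) y) (.app (.app (.tm .br) s') y) := by
  refine Relation.ReflTransGen.lift (fun u => Tm.app (.app (.tm .br) u) y) (fun u v huv => ?_) _ _ h
  have := Red.ctx (G := G) (a := .br) (ts₁ := []) (ts₂ := [y]) huv (by rfl)
  simpa [appList, Function.onFun] using this

theorem redStar_br_right {x s s' : Tm G.N (TSym β)} (h : RedStar G s s') :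
    RedStar G (.app (.app (.tm .br) x) s) (.app (.app (.tm .br) x) s') := by
  refine Relation.ReflTransGen.lift (fun u => Tm.app (.app (.tm .br) x) u) (fun u v huv => ?_) _ _ h
  have := Red.ctx (G := G) (a := .br) (ts₁ := [x]) (ts₂ := []) huv (by rfl)
  simpa [appList, Function.onFun] using this

theorem PT.redStar {s : Tm G.N (TSym β)} {π : BT β} (h : PT G s π) :
    RedStar G s π.toTm := by
  induction h with
  | e => exact .refl
  | ltr => exact .refl
  | br _ _ ih1 ih2 =>
    exact .trans (redStar_br_left ih1) (redStar_br_right ih2)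
  | step hb hl _ ih => exact .head (.step hb hl) ih

end Tree

section Leaves
variable {β : Type}

def wordOf (π : BT β) : List β := π.leaves.filterMap id

@[simp] theorem wordOf_e : wordOf (.e : BT β) = [] := rfl
@[simp] theorem wordOf_ltr (a : β) : wordOf (.ltr a) = [a] := rfl
@[simp] theorem wordOf_br (l r : BT β) : wordOf (.br l r) = wordOf l ++ wordOf r := by
  simp [wordOf, BT.leaves]

theorem leaves_ne_nil (π : BT β) : π.leaves ≠ [] := by
  induction π with
  | e => simp [BT.leaves]
  | ltr a => simp [BT.leaves]
  | br l r ihl ihr => simp [BT.leaves, ihl]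

theorem eq_e_of_leaves {π : BT β} (h : π.leaves = [none]) : π = .e := by
  cases π with
  | e => rfl
  | ltr a => simp [BT.leaves] at h
  | br l r =>
    have hl := leaves_ne_nil l
    have hr := leaves_ne_nil r
    simp only [BT.leaves] at h
    cases hml : l.leaves with
    | nil => exact absurd hml hl
    | cons a as =>
      rw [hml, List.cons_append] at h
      simp only [List.cons.injEq] at h
      have := List.append_eq_nil_iff.mp h.2
      exact absurd this.2 hr

theorem map_some_filterMap {l : List (Option β)} (h : Option.none ∉ l) :
    (l.filterMap id).map Option.some = l := by
  induction l with
  | nil => rfl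
  | cons a t ih =>
    cases a with
    | none => simp at h
    | some b =>
      simp only [List.mem_cons] at h
      push_neg at h
      rw [List.filterMap_cons_some (f := id) rfl, List.map_cons, ih h.2]

theorem map_some_wordOf {π : BT β} (h : Option.none ∉ π.leaves) :
    (wordOf π).map Option.some = π.leaves := map_some_filterMap h

end Leaves
section General
variable {β : Type} (G' : Grammar (TSym β) treeAr)

/-- Sort translation: o ↦ o→o. -/
def trS : STy → STy
  | .o => .arr .o .o
  | .arr a b => .arr (trS a) (trS b)

def brS : STy := .arr (.arr .o .o) (.arr (.arr .o .o) (.arr .o .o))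

@[simp] theorem args_trS (κ : STy) : (trS κ).args = κ.args.map trS ++ [.o] := by
  induction κ with
  | o => rfl
  | arr a b iha ihb => simp [trS, STy.args, ihb]

theorem ord_trS (κ : STy) : (trS κ).ord ≤ κ.ord + 1 := by
  induction κ with
  | o => simp [trS, STy.ord]
  | arr a b iha ihb =>
    simp only [trS, STy.ord]
    omega

/-- Non-terminals of the word grammar. -/
abbrev NW := Sum G'.N (Option (Option Unit))

def ntyW : NW G' → STy
  | .inl A => trS (G'.nty A)
  | .inr none => .arr .o .o
  | .inr (some none) => brS
  | .inr (some (some _)) => .o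

/-- Term translation. -/
def tr : Tm G'.N (TSym β) → Tm (NW G') (Option β)
  | .var i => .var i
  | .nt A => .nt (.inl A)
  | .tm .br => .nt (.inr (some none))
  | .tm .e => .nt (.inr none)
  | .tm (.ltr a) => .tm (some a)
  | .app s t => .app (tr s) (tr t)

def rulesW : NW G' → List (Tm (NW G') (Option β))
  | .inl A => (G'.rules A).map (fun b => .app (tr G' b) (.var (G'.nty A).args.length))
  | .inr none => [.var 0]
  | .inr (some none) => [.app (.var 0) (.app (.var 1) (.var 2))]
  | .inr (some (some _)) => [.app (.nt (.inl G'.start)) (.tm none)]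

theorem tr_hasTy {Γ : List STy} {t : Tm G'.N (TSym β)} {κ : STy}
    (h : HasTy treeAr G'.nty Γ t κ) (Δ : List STy) :
    HasTy wordAr (ntyW G') (Γ.map trS ++ Δ) (tr G' t) (trS κ) := by
  induction h with
  | @var i κ hv =>
    refine .var ?_
    have hi : i < Γ.length := hasTy_var_lt hv
    rw [List.getElem?_append_left (by simpa using hi), List.getElem?_map, hv]
    rfl
  | @nt A => exact .nt (A := Sum.inl A)
  | @tm a =>
    cases a with
    | br => exact .nt (A := Sum.inr (some none))
    | e => exact .nt (A := Sum.inr none)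
    | ltr b => exact .tm (a := some b)
  | app h1 h2 ih1 ih2 => exact .app ih1 ih2

theorem tr_substL {Γ : List STy} {t : Tm G'.N (TSym β)} {κ : STy}
    (h : HasTy treeAr G'.nty Γ t κ) (ts : List (Tm G'.N (TSym β)))
    (hlen : Γ.length ≤ ts.length) (us : List (Tm (NW G') (Option β))) :
    substL (ts.map (tr G') ++ us) (tr G' t) = tr G' (substL ts t) := by
  induction h with
  | @var i κ hv =>
    have hi : i < ts.length := lt_of_lt_of_le (hasTy_var_lt hv) hlen
    show (ts.map (tr G') ++ us).getD i (.var i) = tr G' (ts.getD i (.var i))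
    rw [List.getD_eq_getElem?_getD, List.getD_eq_getElem?_getD, List.getElem?_append_left (by simpa using hi),
      List.getElem?_map]
    cases hts : ts[i]? with
    | none => rfl
    | some v => rfl
  | nt => rfl
  | @tm a => cases a <;> rfl
  | app h1 h2 ih1 ih2 => show Tm.app _ _ = Tm.app _ _; rw [ih1, ih2]

@[reducible] def GW : Grammar (Option β) wordAr where
  N := NW G'
  nFin := by haveI := G'.nFin; infer_instance
  nty := ntyW G'
  start := .inr (some (some ()))
  startO := rfl
  rules := rulesW G'
  rulesTy := by
    rintro (A | e | e | e) t ht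
    · simp only [rulesW, List.mem_map] at ht
      obtain ⟨b, hb, rfl⟩ := ht
      have hty := G'.rulesTy A b hb
      have h1 := tr_hasTy G' hty [STy.o]
      show HasTy wordAr (ntyW G') (trS (G'.nty A)).args _ .o
      rw [args_trS]
      refine .app h1 (.var ?_)
      rw [List.getElem?_append_right (by simp)]
      simp
    · obtain rfl : t = .var 0 := by simpa [rulesW] using ht
      exact .var rfl
    · obtain rfl : t = .app (.var 0) (.app (.var 1) (.var 2)) := by simpa [rulesW] using ht
      exact .app (.var rfl) (.app (.var rfl) (.var rfl))
    · obtain rfl : t = .app (.nt (.inl G'.start)) (.tm none) := by simpa [rulesW] using ht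
      refine .app ?_ (.tm (a := (none : Option β)))
      have h : ntyW G' (.inl G'.start) = .arr .o .o := by
        show trS (G'.nty G'.start) = _
        rw [G'.startO]; rfl
      exact h ▸ (.nt (A := Sum.inl G'.start))

theorem GW_orderLE (n : Nat) (hn : 1 ≤ n) (hG' : G'.orderLE n) : (GW G').orderLE (n + 1) := by
  rintro (A | e | e | e)
  · exact le_trans (ord_trS _) (by have := hG' A; omega)
  · show ((STy.arr .o .o).ord) ≤ n + 1
    simp [STy.ord]
  · show (brS.ord) ≤ n + 1
    simp [brS, STy.ord]; omega
  · show ((STy.o).ord) ≤ n + 1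
    simp [STy.ord]

end General
section GeneralSim
variable {β : Type} (G' : Grammar (TSym β) treeAr)

theorem getD_append_length {α : Type _} (l : List α) (u : α) (d : α) :
    (l ++ [u]).getD l.length d = u := by
  induction l with
  | nil => rfl
  | cons a l ih => simpa using ih

theorem hasTy_nt_inv {N T : Type} {ar : T → Nat} {nty : N → STy} {Γ : List STy} {A : N}
    {κ : STy} (h : HasTy ar nty Γ (.nt A) κ) : κ = nty A := by cases h; rfl

theorem hasTy_tm_inv {N T : Type} {ar : T → Nat} {nty : N → STy} {Γ : List STy} {a : T}
    {κ : STy} (h : HasTy ar nty Γ (.tm a) κ) : κ = tyOfArity (ar a) := by cases h; rfl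

theorem hasTy_var_nil {N T : Type} {ar : T → Nat} {nty : N → STy} {i : Nat}
    {κ : STy} (h : HasTy ar nty [] (.var i : Tm N T) κ) : False := by
  cases h with | var hv => simp at hv

theorem tr_appList (s : Tm G'.N (TSym β)) (ts : List (Tm G'.N (TSym β))) :
    tr G' (appList s ts) = appList (tr G' s) (ts.map (tr G')) := by
  induction ts generalizing s with
  | nil => rfl
  | cons t ts ih => simpa [appList, tr] using ih (s := .app s t)

theorem fwd {t : Tm G'.N (TSym β)} {π : BT β} (hp : PT G' t π) :
    HasTy treeAr G'.nty [] t .o →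
    ∀ {m u w}, PW (GW G') m u w →
      ∃ m', PW (GW G') m' (.app (tr G' t) u) (wordOf π ++ w) := by
  induction hp with
  | e =>
    intro _ m u w hw
    refine ⟨m + 1, ?_⟩
    have := PW.step (G := GW G') (A := .inr none) (ts := [u])
      (body := .var 0) (by simp [GW, rulesW]) rfl (by exact hw)
    simpa [tr, appList] using this
  | @ltr a =>
    intro _ m u w hw
    exact ⟨m + 1, by simpa [tr] using PW.cons (a := a) hw⟩
  | @br s t l r hps hpt ihs iht =>
    intro hty m u w hw
    obtain ⟨hty1, hty2⟩ : HasTy treeAr G'.nty [] s .o ∧ HasTy treeAr G'.nty [] t .o := by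
      cases hty with
      | app h1 h2 =>
        cases h1 with
        | app h3 h4 => exact (by cases h3; exact ⟨h4, h2⟩)
    obtain ⟨m1, h1⟩ := iht hty2 hw
    obtain ⟨m2, h2⟩ := ihs hty1 h1
    refine ⟨m2 + 1, ?_⟩
    have := PW.step (G := GW G') (A := .inr (some none)) (ts := [tr G' s, tr G' t, u])
      (body := .app (.var 0) (.app (.var 1) (.var 2))) (by simp [GW, rulesW]) rfl
      (by simpa [substL, List.append_assoc] using h2)
    simpa [List.append_assoc, tr, appList] using this
  | @step A ts body π hb hl hsub ih =>
    intro hty m u w hw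
    obtain ⟨σs, hnt, hts⟩ := hasTy_appList hty
    have hσ : σs = (G'.nty A).args := by
      rw [← hasTy_nt_inv hnt, args_mkArr]
    subst hσ
    have htysub : HasTy treeAr G'.nty [] (substL ts body) .o :=
      hasTy_substL (G'.rulesTy A body hb) (fun i κ' hv => forall₂_getD hts i κ' _ hv)
    obtain ⟨m1, h1⟩ := ih htysub hw
    refine ⟨m1 + 1, ?_⟩
    have hmem : Tm.app (tr G' body) (.var (G'.nty A).args.length) ∈ (GW G').rules (.inl A) := by
      simp only [GW, rulesW, List.mem_map]
      exact ⟨body, hb, rfl⟩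
    have hlen : (ts.map (tr G') ++ [u]).length = ((GW G').nty (.inl A)).args.length := by
      show _ = (ntyW G' (.inl A)).args.length
      simp [ntyW, hl]
    have e1 : substL (ts.map (tr G') ++ [u]) (.app (tr G' body) (.var (G'.nty A).args.length))
        = .app (tr G' (substL ts body)) u := by
      show Tm.app _ _ = _
      rw [tr_substL G' (G'.rulesTy A body hb) ts (le_of_eq hl.symm)]
      congr 1
      show (ts.map (tr G') ++ [u]).getD (G'.nty A).args.length _ = u
      rw [← hl]
      have := getD_append_length (ts.map (tr G')) u (.var ts.length)
      simpa using this
    rw [tr_appList, ← appList_concat]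
    exact PW.step hmem hlen (by rw [e1]; exact h1)

theorem bwd : ∀ m : Nat, ∀ {t : Tm G'.N (TSym β)} {u w},
    HasTy treeAr G'.nty [] t .o →
    PW (GW G') m (.app (tr G' t) u) w →
    ∃ π w₂ m₂, PT G' t π ∧ w = wordOf π ++ w₂ ∧ m₂ ≤ m ∧ PW (GW G') m₂ u w₂ := by
  intro m
  induction m using Nat.strong_induction_on with
  | _ m ih =>
    intro t u w hty hpw
    rcases exists_spine t with ⟨i, ts, rfl⟩ | ⟨A, ts, rfl⟩ | ⟨a, ts, rfl⟩
    · obtain ⟨σs, hv, -⟩ := hasTy_appList hty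
      exact absurd hv (fun hv => hasTy_var_nil hv)
    · -- non-terminal头
      obtain ⟨σs, hnt, hts⟩ := hasTy_appList hty
      have hσ : σs = (G'.nty A).args := by
        rw [← hasTy_nt_inv hnt, args_mkArr]
      subst hσ
      have hl : ts.length = (G'.nty A).args.length := hts.length_eq
      rw [tr_appList] at hpw
      rw [← appList_concat] at hpw
      obtain ⟨k, body', rfl, hbmem, hlen', hk⟩ := PW.nt_inv hpw
      simp only [GW, rulesW, List.mem_map] at hbmem
      obtain ⟨b, hb, rfl⟩ := hbmem
      have e1 : substL (ts.map (tr G') ++ [u]) (.app (tr G' b) (.var (G'.nty A).args.length))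
          = .app (tr G' (substL ts b)) u := by
        show Tm.app _ _ = _
        rw [tr_substL G' (G'.rulesTy A b hb) ts (le_of_eq hl.symm)]
        congr 1
        show (ts.map (tr G') ++ [u]).getD (G'.nty A).args.length _ = u
        rw [← hl]
        have := getD_append_length (ts.map (tr G')) u (.var ts.length)
        simpa using this
      rw [e1] at hk
      have htysub : HasTy treeAr G'.nty [] (substL ts b) .o :=
        hasTy_substL (G'.rulesTy A b hb) (fun i κ' hv => forall₂_getD hts i κ' _ hv)
      obtain ⟨π, w₂, m₂, hPT, rfl, hm₂, hu⟩ := ih k (by omega) htysub hk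
      exact ⟨π, w₂, m₂, .step hb hl hPT, rfl, by omega, hu⟩
    · obtain ⟨σs, htm, hts⟩ := hasTy_appList hty
      have hσ : σs = (tyOfArity (treeAr a)).args := by
        rw [← hasTy_tm_inv htm, args_mkArr]
      cases a with
      | br =>
        have hσ2 : σs = [.o, .o] := hσ
        subst hσ2
        obtain ⟨t₁, t₂, rfl, ht₁, ht₂⟩ :
            ∃ t₁ t₂, ts = [t₁, t₂] ∧ HasTy treeAr G'.nty [] t₁ .o ∧
              HasTy treeAr G'.nty [] t₂ .o := by
          cases hts with
          | cons h1 h2 =>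
            cases h2 with
            | cons h3 h4 => cases h4; exact ⟨_, _, rfl, h1, h3⟩
        have hpw' : PW (GW G') m
            (appList (.nt (.inr (some none))) [tr G' t₁, tr G' t₂, u]) w := hpw
        obtain ⟨k, body', rfl, hbmem, hlen', hk⟩ := PW.nt_inv hpw'
        obtain rfl : body' = .app (.var 0) (.app (.var 1) (.var 2)) := by
          simpa [GW, rulesW] using hbmem
        have hk' : PW (GW G') k (.app (tr G' t₁) (.app (tr G' t₂) u)) w := hk
        obtain ⟨π₁, w', m₁, h1, rfl, hm₁, hu'⟩ := ih k (by omega) ht₁ hk'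
        obtain ⟨π₂, w₂, m₂, h2, rfl, hm₂, hu⟩ := ih m₁ (by omega) ht₂ hu'
        exact ⟨.br π₁ π₂, w₂, m₂, .br h1 h2, by simp [List.append_assoc], by omega, hu⟩
      | e =>
        have hσ2 : σs = [] := hσ
        subst hσ2
        obtain rfl : ts = [] := by cases hts; rfl
        have hpw' : PW (GW G') m (appList (.nt (.inr none)) [u]) w := hpw
        obtain ⟨k, body', rfl, hbmem, hlen', hk⟩ := PW.nt_inv hpw'
        obtain rfl : body' = .var 0 := by simpa [GW, rulesW] using hbmem
        exact ⟨.e, w, k, .e, by simp, by omega, hk⟩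
      | ltr b =>
        have hσ2 : σs = [] := hσ
        subst hσ2
        obtain rfl : ts = [] := by cases hts; rfl
        have hpw' : PW (GW G') m (.app (.tm (some b)) u) w := hpw
        obtain ⟨k, w', rfl, rfl, hk⟩ := hpw'.cons_inv
        exact ⟨.ltr b, w', k, .ltr, rfl, by omega, hk⟩

theorem GW_key (w : List β) :
    w ∈ WordLang (GW G') ↔ ∃ π : BT β, RedStar G' (.nt G'.start) π.toTm ∧ w = wordOf π := by
  constructor
  · intro hw
    obtain ⟨m, hm⟩ := PW.of_redStar hw
    have hm' : PW (GW G') m (appList (.nt (.inr (some (some ())) : NW G')) []) w := hm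
    obtain ⟨k, body, rfl, hb, -, hk⟩ := PW.nt_inv hm'
    obtain rfl : body = .app (.nt (.inl G'.start)) (.tm none) := by
      simpa [GW, rulesW] using hb
    rw [substL_nil] at hk
    have hty : HasTy treeAr G'.nty [] (.nt G'.start : Tm G'.N (TSym β)) .o :=
      G'.startO ▸ HasTy.nt
    obtain ⟨π, w₂, m₂, hPT, rfl, -, hu⟩ := bwd G' k hty hk
    have hw2 : w₂ = [] := hu.none_inv
    exact ⟨π, hPT.redStar, by simp [hw2]⟩
  · rintro ⟨π, hred, rfl⟩
    have hPT : PT G' (.nt G'.start) π := PT.of_redStar hred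
    have hty : HasTy treeAr G'.nty [] (.nt G'.start : Tm G'.N (TSym β)) .o :=
      G'.startO ▸ HasTy.nt
    obtain ⟨m', hm'⟩ := fwd G' hPT hty (PW.nil (G := GW G'))
    have hsub : PW (GW G') m'
        (substL [] (.app (.nt (.inl G'.start)) (.tm (none : Option β)))) (wordOf π) := by
      rw [substL_nil]
      simpa [tr] using hm'
    have hstep : PW (GW G') (m' + 1)
        (appList (.nt ((.inr (some (some ()))) : NW G')) []) (wordOf π) :=
      PW.step (by simp [GW, rulesW]) rfl hsub
    exact hstep.redStar

end GeneralSim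
section Assemble
variable {β : Type}

theorem assemble (G' : Grammar (TSym β) treeAr) (G : Grammar (Option β) wordAr)
    (hKey : ∀ w, w ∈ WordLang G ↔
      ∃ π : BT β, RedStar G' (.nt G'.start) π.toTm ∧ w = wordOf π)
    (he : ∀ w ∈ LeafLangE G', Option.none ∉ w) :
    (List.map Option.some) '' (WordLang G) = LeafLangE G' := by
  ext x
  constructor
  · rintro ⟨w, hw, rfl⟩
    obtain ⟨π, hred, rfl⟩ := (hKey w).mp hw
    by_cases hπ : π.leaves = [none]
    · have hπe : π = .e := eq_e_of_leaves hπ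
      subst hπe
      exact Or.inr ⟨rfl, ⟨.e, hred, rfl⟩⟩
    · have hmem : π.leaves ∈ LeafLangE G' := Or.inl ⟨⟨π, hred, rfl⟩, hπ⟩
      have hnone : Option.none ∉ π.leaves := he _ hmem
      rw [map_some_wordOf hnone]
      exact hmem
  · rintro (⟨⟨π, hred, hleq⟩, hne⟩ | ⟨rfl, hmem⟩)
    · subst hleq
      have hnone := he _ (Or.inl ⟨⟨π, hred, rfl⟩, hne⟩)
      exact ⟨wordOf π, (hKey _).mpr ⟨π, hred, rfl⟩, map_some_wordOf hnone⟩
    · obtain ⟨π, hred, hl⟩ := hmem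
      have hπe : π = .e := eq_e_of_leaves hl
      subst hπe
      exact ⟨[], (hKey []).mpr ⟨.e, hred, rfl⟩, rfl⟩

end Assemble
section ZeroOrder
variable {β : Type} (G' : Grammar (TSym β) treeAr)

theorem sty_eq_o_of_ord {κ : STy} (h : κ.ord ≤ 0) : κ = .o := by
  cases κ with
  | o => rfl
  | arr a b => simp [STy.ord] at h

/-- Ground tree-shaped terms of order-0 grammars. -/
inductive Shape : Tm G'.N (TSym β) → Prop
  | e : Shape (.tm .e)
  | ltr {a} : Shape (.tm (.ltr a))
  | nt {A} : Shape (.nt A)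
  | br {s t} : Shape s → Shape t → Shape (.app (.app (.tm .br) s) t)

def Good : Tm G'.N (TSym β) → STy → Prop := fun t κ =>
  match κ with
  | .o => Shape G' t
  | .arr .o .o => ∃ s, Shape G' s ∧ t = .app (.tm .br) s
  | .arr .o (.arr .o .o) => t = .tm .br
  | _ => False

theorem good_of (h0 : ∀ A, G'.nty A = .o) {t : Tm G'.N (TSym β)} {κ : STy}
    (h : HasTy treeAr G'.nty [] t κ) : Good G' t κ := by
  induction h with
  | @var i κ hv => simp at hv
  | @nt A =>
    have := h0 A
    rw [this]
    exact Shape.nt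
  | @tm a =>
    cases a with
    | br => exact rfl
    | e => exact Shape.e
    | ltr b => exact Shape.ltr
  | @app s t κ₁ κ₂ h1 h2 ih1 ih2 =>
    cases κ₁ with
    | o =>
      cases κ₂ with
      | o =>
        obtain ⟨s', hs', rfl⟩ := ih1
        exact Shape.br hs' ih2
      | arr κa κb =>
        cases κa with
        | o =>
          cases κb with
          | o =>
            obtain rfl : s = .tm .br := ih1
            exact ⟨t, ih2, rfl⟩
          | arr _ _ => exact ih1.elim
        | arr _ _ => exact ih1.elim
    | arr _ _ => exact ih1.elim

theorem shape_of (h0 : ∀ A, G'.nty A = .o) {t : Tm G'.N (TSym β)}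
    (h : HasTy treeAr G'.nty [] t .o) : Shape G' t := good_of G' h0 h

def nty0 : Option G'.N → STy
  | none => .o
  | some _ => .arr .o .o

def tr0 : Tm G'.N (TSym β) → Tm (Option G'.N) (Option β) → Tm (Option G'.N) (Option β)
  | .app (.app (.tm .br) s) t, u => tr0 s (tr0 t u)
  | .tm .e, u => u
  | .tm (.ltr a), u => .app (.tm (some a)) u
  | .nt A, u => .app (.nt (some A)) u
  | _, u => u

theorem tr0_hasTy {t : Tm G'.N (TSym β)} (hs : Shape G' t) :
    ∀ {Γ u}, HasTy wordAr (nty0 G') Γ u .o → HasTy wordAr (nty0 G') Γ (tr0 G' t u) .o := by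
  induction hs with
  | e => exact fun hu => hu
  | @ltr a => exact fun hu => .app (.tm (a := some a)) hu
  | @nt A => exact fun hu => .app (.nt (A := some A)) hu
  | br h1 h2 ih1 ih2 => exact fun hu => ih1 (ih2 hu)

theorem tr0_substL {t : Tm G'.N (TSym β)} (hs : Shape G' t) :
    ∀ (σ : List (Tm (Option G'.N) (Option β))) (u), substL σ (tr0 G' t u) = tr0 G' t (substL σ u) := by
  induction hs with
  | e => exact fun σ u => rfl
  | ltr => exact fun σ u => rfl
  | nt => exact fun σ u => rfl
  | br h1 h2 ih1 ih2 =>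
    intro σ u
    show substL σ (tr0 G' _ (tr0 G' _ u)) = _
    rw [ih1, ih2]
    rfl

@[reducible] def G0 (h0 : ∀ A, G'.nty A = .o) : Grammar (Option β) wordAr where
  N := Option G'.N
  nFin := by
    haveI := G'.nFin
    exact Finite.of_equiv (G'.N ⊕ PUnit.{1}) (Equiv.optionEquivSumPUnit G'.N).symm
  nty := nty0 G'
  start := none
  startO := rfl
  rules := fun A => match A with
    | none => [.app (.nt (some G'.start)) (.tm none)]
    | some A => (G'.rules A).map (fun b => tr0 G' b (.var 0))
  rulesTy := by
    rintro (_ | A) t ht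
    · obtain rfl : t = .app (.nt (some G'.start)) (.tm none) := by simpa using ht
      exact .app (.nt (A := some G'.start)) (.tm (a := (none : Option β)))
    · simp only [List.mem_map] at ht
      obtain ⟨b, hb, rfl⟩ := ht
      have hbty : HasTy treeAr G'.nty [] b .o := by
        have := G'.rulesTy A b hb
        rwa [h0 A] at this
      exact tr0_hasTy G' (shape_of G' h0 hbty) (.var rfl)

theorem G0_orderLE (h0 : ∀ A, G'.nty A = .o) (n : Nat) : (G0 G' h0).orderLE (n + 1) := by
  rintro (_ | A)
  · show (STy.o).ord ≤ n + 1
    simp [STy.ord]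
  · show ((STy.arr .o .o)).ord ≤ n + 1
    simp [STy.ord]

theorem fwd0 (h0 : ∀ A, G'.nty A = .o) {t : Tm G'.N (TSym β)} {π : BT β}
    (hp : PT G' t π) (hs : Shape G' t) :
    ∀ {m u w}, PW (G0 G' h0) m u w →
      ∃ m', PW (G0 G' h0) m' (tr0 G' t u) (wordOf π ++ w) := by
  induction hp with
  | e => exact fun hw => ⟨_, by simpa [tr0] using hw⟩
  | @ltr a => exact fun hw => ⟨_, by simpa [tr0] using hw.cons (a := a)⟩
  | @br s t l r h1 h2 ih1 ih2 =>
    intro m u w hw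
    cases hs with
    | br hs1 hs2 =>
      obtain ⟨m1, hm1⟩ := ih2 hs2 hw
      obtain ⟨m2, hm2⟩ := ih1 hs1 hm1
      refine ⟨m2, ?_⟩
      show PW (G0 G' h0) m2 (tr0 G' s (tr0 G' t u)) (wordOf (BT.br l r) ++ w)
      simpa [List.append_assoc] using hm2
  | @step A ts body π hb hl hsub ih =>
    intro m u w hw
    obtain rfl : ts = [] := by
      rw [h0 A] at hl
      exact List.length_eq_zero_iff.mp hl
    have hbty : HasTy treeAr G'.nty [] body .o := by
      have := G'.rulesTy A body hb
      rwa [h0 A] at this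
    simp only [substL_nil] at ih
    obtain ⟨m1, hm1⟩ := ih (shape_of G' h0 hbty) hw
    refine ⟨m1 + 1, ?_⟩
    have hmem : tr0 G' body (.var 0) ∈ (G0 G' h0).rules (some A) := by
      simp only [List.mem_map]
      exact ⟨body, hb, rfl⟩
    have hsubeq : substL [u] (tr0 G' body (.var 0)) = tr0 G' body u := by
      rw [tr0_substL G' (shape_of G' h0 hbty)]
      rfl
    have := PW.step (G := G0 G' h0) (A := some A) (ts := [u]) hmem rfl
      (by rw [hsubeq]; exact hm1)
    exact this

theorem bwd0 (h0 : ∀ A, G'.nty A = .o) : ∀ m : Nat, ∀ {t : Tm G'.N (TSym β)},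
    Shape G' t → ∀ {m₀ u w}, m₀ ≤ m → PW (G0 G' h0) m₀ (tr0 G' t u) w →
    ∃ π w₂ m₂, PT G' t π ∧ w = wordOf π ++ w₂ ∧ m₂ ≤ m₀ ∧ PW (G0 G' h0) m₂ u w₂ := by
  intro m
  induction m using Nat.strong_induction_on with
  | _ m ih =>
    intro t hs
    induction hs with
    | e =>
      intro m₀ u w _ hp
      exact ⟨.e, w, m₀, .e, by simp, le_refl _, by simpa [tr0] using hp⟩
    | @ltr a =>
      intro m₀ u w _ hp
      have hp' : PW (G0 G' h0) m₀ (.app (.tm (some a)) u) w := hp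
      obtain ⟨k, w', rfl, rfl, hk⟩ := hp'.cons_inv
      exact ⟨.ltr a, w', k, .ltr, rfl, by omega, hk⟩
    | @nt A =>
      intro m₀ u w hle hp
      have hp' : PW (G0 G' h0) m₀ (appList (.nt (some A)) [u]) w := hp
      obtain ⟨k, body', rfl, hbmem, -, hk⟩ := PW.nt_inv hp'
      simp only [List.mem_map] at hbmem
      obtain ⟨b, hb, rfl⟩ := hbmem
      have hbty : HasTy treeAr G'.nty [] b .o := by
        have := G'.rulesTy A b hb
        rwa [h0 A] at this
      have hsb := shape_of G' h0 hbty
      rw [tr0_substL G' hsb] at hk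
      have hk' : PW (G0 G' h0) k (tr0 G' b u) w := hk
      obtain ⟨π, w₂, m₂, hPT, rfl, hm₂, hu⟩ := ih k (by omega) hsb (le_refl k) hk'
      refine ⟨π, w₂, m₂, ?_, rfl, by omega, hu⟩
      exact PT.step (ts := []) hb (by rw [h0 A]; rfl) (by rwa [substL_nil])
    | @br s t hs1 hs2 ih1 ih2 =>
      intro m₀ u w hle hp
      have hp' : PW (G0 G' h0) m₀ (tr0 G' s (tr0 G' t u)) w := hp
      obtain ⟨π₁, w', m₁, h1, rfl, hm₁, hu'⟩ := ih1 hle hp'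
      obtain ⟨π₂, w₂, m₂, h2, rfl, hm₂, hu⟩ := ih2 (le_trans hm₁ hle) hu'
      exact ⟨.br π₁ π₂, w₂, m₂, .br h1 h2, by simp [List.append_assoc], by omega, hu⟩

theorem G0_key (h0 : ∀ A, G'.nty A = .o) (w : List β) :
    w ∈ WordLang (G0 G' h0) ↔
      ∃ π : BT β, RedStar G' (.nt G'.start) π.toTm ∧ w = wordOf π := by
  constructor
  · intro hw
    obtain ⟨m, hm⟩ := PW.of_redStar hw
    have hm' : PW (G0 G' h0) m (appList (.nt (none : Option G'.N)) []) w := hm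
    obtain ⟨k, body, rfl, hb, -, hk⟩ := PW.nt_inv hm'
    obtain rfl : body = .app (.nt (some G'.start)) (.tm none) := by simpa using hb
    rw [substL_nil] at hk
    have hk' : PW (G0 G' h0) k (tr0 G' (.nt G'.start) (.tm none)) w := hk
    obtain ⟨π, w₂, m₂, hPT, rfl, -, hu⟩ := bwd0 G' h0 k Shape.nt (le_refl k) hk'
    have hw2 : w₂ = [] := hu.none_inv
    exact ⟨π, hPT.redStar, by simp [hw2]⟩
  · rintro ⟨π, hred, rfl⟩
    have hPT : PT G' (.nt G'.start) π := PT.of_redStar hred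
    obtain ⟨m', hm'⟩ := fwd0 G' h0 hPT Shape.nt (PW.nil (G := G0 G' h0))
    have hsub : PW (G0 G' h0) m'
        (substL [] (.app (.nt (some G'.start)) (.tm (none : Option β)))) (wordOf π) := by
      rw [substL_nil]
      simpa [tr0] using hm'
    have hstep : PW (G0 G' h0) (m' + 1)
        (appList (.nt (none : Option G'.N)) []) (wordOf π) :=
      PW.step (by simp) rfl hsub
    exact hstep.redStar

end ZeroOrder
/-- Converse of the main theorem: for any tree grammar G' of order n such that
    no word of its ε-adjusted frontier language contains the symbol e, there is
    a word grammar G of order at most n+1 with W(G) = L_leaf^ε(G'). -/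
theorem stmt4 {β : Type} (n : Nat) (G' : Grammar (TSym β) treeAr)
    (hG' : G'.orderLE n)
    (he : ∀ w ∈ LeafLangE G', Option.none ∉ w) :
    ∃ G : Grammar (Option β) wordAr, G.orderLE (n + 1) ∧
      (List.map Option.some) '' (WordLang G) = LeafLangE G' := by
  rcases Nat.eq_zero_or_pos n with rfl | hn
  · have h0 : ∀ A, G'.nty A = .o := fun A => sty_eq_o_of_ord (hG' A)
    exact ⟨G0 G' h0, G0_orderLE G' h0 0, assemble G' (G0 G' h0) (G0_key G' h0) he⟩
  · exact ⟨GW G', GW_orderLE G' n hn hG', assemble G' (GW G') (GW_key G') he⟩
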